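/- Let R be a commutative ring. If the matrix rings M(n,R) and M(m,R) are isomorphic as rings, then n = m. (That is, commutative rings satisfy the (n,m)-condition.) -/

import Mathlib

open Matrix Cardinal

/-- A ring equiv of matrix rings sends scalar matrices to scalar matrices. -/
lemma exists_scalar_image {R : Type*} [CommRing R] {n m : ℕ}
    (e : Matrix (Fin n) (Fin n) R ≃+* Matrix (Fin m) (Fin m) R) (r : R) :
    ∃ s : R, e (Matrix.scalar (Fin n) r) = Matrix.scalar (Fin m) s := by
  have h : e (Matrix.scalar (Fin n) r) ∈ Set.range (Matrix.scalar (Fin m)) := by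
    rw [Matrix.mem_range_scalar_iff_commute_single']
    intro i j
    have hc : ∀ A : Matrix (Fin n) (Fin n) R,
        Commute A (Matrix.scalar (Fin n) r) := by
      intro A
      show A * _ = _ * A
      ext i j
      simp [Matrix.mul_apply, Matrix.scalar_apply, Matrix.diagonal_apply, mul_comm]
    have := hc (e.symm (single i j 1))
    have h2 := congrArg e (this)
    simpa [Commute, SemiconjBy, _root_.map_mul] using h2
  obtain ⟨s, hs⟩ := h
  exact ⟨s, hs.symm⟩

/-- Commutative rings satisfy the (n,m)-condition: if the matrix
rings `M(n,R)` and `M(m,R)` are isomorphic, then `n = m`. -/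
theorem commutative_nm_condition {R : Type*} [CommRing R] [Nontrivial R] (n m : ℕ)
    (e : Matrix (Fin n) (Fin n) R ≃+* Matrix (Fin m) (Fin m) R) :
    n = m := by
  rcases Nat.eq_zero_or_pos n with hn | hn
  · subst hn
    rcases Nat.eq_zero_or_pos m with hm | hm
    · exact hm.symm
    · exfalso
      haveI : NeZero m := ⟨hm.ne'⟩
      have : Subsingleton (Matrix (Fin 0) (Fin 0) R) := inferInstance
      have h01 : (1 : Matrix (Fin m) (Fin m) R) = 0 := by
        have := congrArg e (Subsingleton.elim (1 : Matrix (Fin 0) (Fin 0) R) 0)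
        simpa using this
      exact one_ne_zero h01
  rcases Nat.eq_zero_or_pos m with hm | hm
  · subst hm
    exfalso
    haveI : NeZero n := ⟨hn.ne'⟩
    have h01 : (1 : Matrix (Fin n) (Fin n) R) = 0 := by
      have := congrArg e.symm (Subsingleton.elim (1 : Matrix (Fin 0) (Fin 0) R) 0)
      simpa using this
    exact one_ne_zero h01
  -- both positive
  haveI : NeZero n := ⟨hn.ne'⟩
  haveI : NeZero m := ⟨hm.ne'⟩
  -- define σ : R → R via the center
  choose σ hσ using exists_scalar_image e
  choose τ hτ using exists_scalar_image e.symm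
  have scalar_inj : Function.Injective (Matrix.scalar (Fin m) : R → Matrix (Fin m) (Fin m) R) := by
    intro a b hab
    have := congrFun (congrFun hab ⟨0, hm⟩) ⟨0, hm⟩
    simpa [Matrix.scalar_apply] using this
  have scalar_inj' : Function.Injective (Matrix.scalar (Fin n) : R → Matrix (Fin n) (Fin n) R) := by
    intro a b hab
    have := congrFun (congrFun hab ⟨0, hn⟩) ⟨0, hn⟩
    simpa [Matrix.scalar_apply] using this
  have hτσ : ∀ r, τ (σ r) = r := by
    intro r
    apply scalar_inj'
    rw [← hτ (σ r), ← hσ r, RingEquiv.symm_apply_apply]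
  have hστ : ∀ r, σ (τ r) = r := by
    intro r
    apply scalar_inj
    rw [← hσ (τ r), ← hτ r, RingEquiv.apply_symm_apply]
  have hσbij : Function.Bijective σ :=
    ⟨fun a b hab => by rw [← hτσ a, hab, hτσ], fun r => ⟨τ r, hστ r⟩⟩
  have hσ0 : σ 0 = 0 := by
    apply scalar_inj
    rw [← hσ 0]
    simp
  -- semilinearity
  have hcomp : ∀ (r : R) (A : Matrix (Fin n) (Fin n) R),
      e (r • A) = σ r • e A := by
    intro r A
    have h1 : r • A = Matrix.scalar (Fin n) r * A := by
      rw [Matrix.scalar_apply, ← Matrix.smul_eq_diagonal_mul]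
    have h2 : σ r • e A = Matrix.scalar (Fin m) (σ r) * e A := by
      rw [Matrix.scalar_apply, ← Matrix.smul_eq_diagonal_mul]
    rw [h1, h2, _root_.map_mul, hσ]
  have hrank := rank_eq_of_equiv_equiv (R := R) (R' := R)
    (M := Matrix (Fin n) (Fin n) R) (M₁ := Matrix (Fin m) (Fin m) R)
    σ e.toAddEquiv hσbij hcomp
  rw [rank_matrix', rank_matrix'] at hrank
  simp only [Cardinal.mk_fin, Cardinal.lift_id] at hrank
  have : ((n * n : ℕ) : Cardinal) = ((m * m : ℕ) : Cardinal) := by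
    push_cast
    exact Cardinal.lift_injective hrank
  exact Nat.mul_self_inj.mp (Nat.cast_injective this)
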